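/- arXiv:2012.10410 — 2 statements merged into one kernel-verified Lean document; each statement's English description precedes it below -/
import Mathlib

section
/- Under the same hypotheses (f : H → H Lipschitz with constant L, bounded by C_f, τL < 1, common initial condition x̄), with T = Nτ, the explicit and implicit Euler sequences satisfy ‖x_N^I − x_N^E‖ ≤ τ e^{τL·N} T L C_f (in particular ‖x_N^I − x_N^E‖ ≤ C τ for a constant C depending only on L, C_f and T). -/
/-- Global comparison between explicit and implicit Euler schemes up to time `T = N τ`. -/
theorem implicit_explicit_euler_global_bound
    {H : Type*} [NormedAddCommGroup H] [InnerProductSpace ℝ H] [CompleteSpace H]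
    (f : H → H) (L Cf : ℝ) (hL : 0 ≤ L)
    (hf : ∀ x y, ‖f x - f y‖ ≤ L * ‖x - y‖)
    (hbdd : ∀ x, ‖f x‖ ≤ Cf)
    (τ : ℝ) (hτ : 0 < τ) (hτL : τ * L < 1)
    (xbar : H) (xE xI : ℕ → H)
    (hE0 : xE 0 = xbar) (hI0 : xI 0 = xbar)
    (hE : ∀ n, xE (n + 1) = xE n + τ • f (xE n))
    (hI : ∀ n, xI (n + 1) = xI n + τ • f (xI (n + 1)))
    (N : ℕ) (T : ℝ) (hT : T = N * τ) :
    ‖xI N - xE N‖ ≤ τ * Real.exp (τ * L * N) * T * L * Cf := by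
  have hCf : 0 ≤ Cf := le_trans (norm_nonneg _) (hbdd xbar)
  have hA : 0 ≤ τ^2 * L * Cf := by positivity
  have hc : (0:ℝ) ≤ τ * L := mul_nonneg hτ.le hL
  have key : ∀ n : ℕ, ‖xI n - xE n‖ ≤ τ^2 * L * Cf * n * (1 + τ*L)^n := by
    intro n
    induction n with
    | zero => simp [hE0, hI0]
    | succ n ih =>
      have h2 : ‖xI (n+1) - xI n‖ ≤ τ * Cf := by
        have hd : xI (n+1) - xI n = τ • f (xI (n+1)) := by
          nth_rewrite 1 [hI n]; abel
        rw [hd, norm_smul, Real.norm_eq_abs, abs_of_pos hτ]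
        exact mul_le_mul_of_nonneg_left (hbdd _) hτ.le
      have h1 : ‖f (xI (n+1)) - f (xE n)‖ ≤ L * (τ * Cf) + L * ‖xI n - xE n‖ := by
        calc ‖f (xI (n+1)) - f (xE n)‖
            ≤ ‖f (xI (n+1)) - f (xI n)‖ + ‖f (xI n) - f (xE n)‖ := by
              have := norm_add_le (f (xI (n+1)) - f (xI n)) (f (xI n) - f (xE n))
              simpa using this
          _ ≤ L * ‖xI (n+1) - xI n‖ + L * ‖xI n - xE n‖ := add_le_add (hf _ _) (hf _ _)
          _ ≤ L * (τ * Cf) + L * ‖xI n - xE n‖ :=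
              add_le_add (mul_le_mul_of_nonneg_left h2 hL) le_rfl
      have hrec : ‖xI (n+1) - xE (n+1)‖
          ≤ ‖xI n - xE n‖ + τ * (L * (τ * Cf) + L * ‖xI n - xE n‖) := by
        have hsplit : xI (n+1) - xE (n+1)
            = (xI n - xE n) + τ • (f (xI (n+1)) - f (xE n)) := by
          nth_rewrite 1 [hI n]
          rw [hE n, smul_sub]; abel
        calc ‖xI (n+1) - xE (n+1)‖
            ≤ ‖xI n - xE n‖ + ‖τ • (f (xI (n+1)) - f (xE n))‖ := by
              rw [hsplit]; exact norm_add_le _ _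
          _ = ‖xI n - xE n‖ + τ * ‖f (xI (n+1)) - f (xE n)‖ := by
              rw [norm_smul, Real.norm_eq_abs, abs_of_pos hτ]
          _ ≤ ‖xI n - xE n‖ + τ * (L * (τ * Cf) + L * ‖xI n - xE n‖) :=
              add_le_add le_rfl (mul_le_mul_of_nonneg_left h1 hτ.le)
      have hpow : (1:ℝ) ≤ (1 + τ*L)^n := one_le_pow₀ (by linarith)
      have hpow' : (0:ℝ) ≤ (1 + τ*L)^n := by positivity
      have ha : 0 ≤ ‖xI n - xE n‖ := norm_nonneg _
      have hPc : (1:ℝ) ≤ (1 + τ*L)^n * (1 + τ*L) := by nlinarith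
      calc ‖xI (n+1) - xE (n+1)‖
          ≤ ‖xI n - xE n‖ + τ * (L * (τ * Cf) + L * ‖xI n - xE n‖) := hrec
        _ = (1 + τ*L) * ‖xI n - xE n‖ + τ^2 * L * Cf := by ring
        _ ≤ (1 + τ*L) * (τ^2 * L * Cf * n * (1 + τ*L)^n) + τ^2 * L * Cf := by
            have := mul_le_mul_of_nonneg_left ih (show (0:ℝ) ≤ 1 + τ*L by linarith)
            linarith
        _ ≤ τ^2 * L * Cf * (n+1 : ℕ) * (1 + τ*L)^(n+1) := by
            rw [pow_succ (1+τ*L) n]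
            push_cast
            nlinarith [mul_nonneg hA (sub_nonneg.2 hPc),
              mul_nonneg (mul_nonneg hA (Nat.cast_nonneg (α := ℝ) n)) hpow']
  have hexp : (1 + τ*L)^N ≤ Real.exp (τ * L * N) := by
    have h1 : (1:ℝ) + τ*L ≤ Real.exp (τ*L) := by
      linarith [Real.add_one_le_exp (τ*L)]
    calc (1 + τ*L)^N ≤ (Real.exp (τ*L))^N := pow_le_pow_left₀ (by linarith) h1 N
      _ = Real.exp (τ * L * N) := by rw [← Real.exp_nat_mul]; ring_nf
  calc ‖xI N - xE N‖ ≤ τ^2 * L * Cf * N * (1 + τ*L)^N := key N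
    _ ≤ τ^2 * L * Cf * N * Real.exp (τ * L * N) :=
        mul_le_mul_of_nonneg_left hexp (by positivity)
    _ = τ * Real.exp (τ * L * N) * T * L * Cf := by rw [hT]; ring
end

section
/- Let H be a Hilbert space, E : H → ℝ C¹, and x : [0,T] → H a C¹ curve satisfying for all 0 ≤ a ≤ b ≤ T the integral inequality E(x_b) − E(x_a) + ∫_a^b (½‖x'_t‖² + ½‖∇E(x_t)‖²) dt ≤ 0. Then x'(t) = −∇E(x(t)) for all t ∈ (0,T). -/
open intervalIntegral Set

/-- EDI characterization of gradient flows: if a `C¹` curve satisfies the integral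
energy dissipation inequality then it solves `x' = -∇E(x)` on `(0, T)`. -/
theorem edi_implies_gradient_flow
    {H : Type*} [NormedAddCommGroup H] [InnerProductSpace ℝ H] [CompleteSpace H]
    (E : H → ℝ) (hE : ContDiff ℝ 1 E)
    (T : ℝ) (x : ℝ → H) (hx : ContDiff ℝ 1 x)
    (hEDI : ∀ a b : ℝ, 0 ≤ a → a ≤ b → b ≤ T →
      E (x b) - E (x a)
        + ∫ t in a..b, ((1 / 2) * ‖deriv x t‖ ^ 2 + (1 / 2) * ‖gradient E (x t)‖ ^ 2) ≤ 0) :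
    ∀ t ∈ Set.Ioo 0 T, deriv x t = -gradient E (x t) := by
  have hEdiff : Differentiable ℝ E := hE.differentiable one_ne_zero
  have hxdiff : Differentiable ℝ x := hx.differentiable one_ne_zero
  -- continuity of gradient
  have hgradcont : Continuous fun y => gradient E y := by
    have : Continuous fun y => fderiv ℝ E y := hE.continuous_fderiv one_ne_zero
    exact (InnerProductSpace.toDual ℝ H).symm.continuous.comp this
  have hderivcont : Continuous (deriv x) := hx.continuous_deriv le_rfl
  -- the chain rule derivative of E ∘ x
  set φ : ℝ → ℝ := fun t => inner ℝ (gradient E (x t)) (deriv x t) with hφ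
  have hφder : ∀ t : ℝ, HasDerivAt (fun s => E (x s)) (φ t) t := by
    intro t
    have h1 : HasGradientAt E (gradient E (x t)) (x t) :=
      (hEdiff (x t)).hasGradientAt
    have h2 : HasDerivAt x (deriv x t) t := (hxdiff t).hasDerivAt
    have := h1.hasFDerivAt.comp_hasDerivAt t h2
    rw [InnerProductSpace.toDual_apply_apply] at this
    exact this
  have hφcont : Continuous φ := by
    exact (hgradcont.comp (hx.continuous)).inner hderivcont
  -- combined integrand
  set g : ℝ → ℝ := fun t => φ t + ((1 / 2) * ‖deriv x t‖ ^ 2 + (1 / 2) * ‖gradient E (x t)‖ ^ 2)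
    with hg
  have hgcont : Continuous g := by
    apply hφcont.add
    exact ((continuous_const.mul ((hderivcont.norm).pow 2)).add
      (continuous_const.mul (((hgradcont.comp hx.continuous).norm).pow 2)))
  -- g t = (1/2) ‖deriv x t + gradient E (x t)‖²
  have hgval : ∀ t, g t = (1 / 2) * ‖deriv x t + gradient E (x t)‖ ^ 2 := by
    intro t
    have := norm_add_sq_real (deriv x t) (gradient E (x t))
    rw [hg]
    simp only [hφ]
    rw [this, real_inner_comm]
    ring
  -- integral of g over subintervals of [0,T] is ≤ 0
  have hint : ∀ a b : ℝ, 0 ≤ a → a ≤ b → b ≤ T → (∫ t in a..b, g t) ≤ 0 := by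
    intro a b ha hab hbT
    have h1 : (∫ t in a..b, φ t) = E (x b) - E (x a) :=
      intervalIntegral.integral_deriv_eq_sub' _ (funext fun t => (hφder t).deriv)
        (fun t _ => (hφder t).differentiableAt) (hφcont.continuousOn)
    have h2 : (∫ t in a..b, g t) = (∫ t in a..b, φ t)
        + ∫ t in a..b, ((1 / 2) * ‖deriv x t‖ ^ 2 + (1 / 2) * ‖gradient E (x t)‖ ^ 2) := by
      rw [← intervalIntegral.integral_add (hφcont.intervalIntegrable a b)
        (((hgcont.sub hφcont).congr (by intro t; simp [hg])).intervalIntegrable a b)]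
    rw [h2, h1]
    exact hEDI a b ha hab hbT
  -- conclude g t ≤ 0 on (0,T)
  intro t ht
  have hgle : g t ≤ 0 := by
    by_contra hpos
    push_neg at hpos
    have hev : ∀ᶠ s in nhds t, 0 < g s ∧ s ∈ Set.Ioo 0 T :=
      (hgcont.continuousAt.eventually (eventually_gt_nhds hpos)).and (isOpen_Ioo.mem_nhds ht)
    rw [Metric.eventually_nhds_iff] at hev
    obtain ⟨ε, hε, hball⟩ := hev
    have hb : t + ε / 2 ∈ Set.Ioo 0 T ∧ 0 < g (t + ε/2) := by
      have := hball (y := t + ε / 2) (by rw [Real.dist_eq]; rw [abs_of_pos] <;> linarith)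
      exact ⟨this.2, this.1⟩
    have hltb : t < t + ε / 2 := by linarith
    have hpos2 : 0 < ∫ s in t..(t + ε / 2), g s := by
      apply intervalIntegral.intervalIntegral_pos_of_pos_on
        (hgcont.intervalIntegrable _ _) _ hltb
      intro s hs
      exact (hball (y := s) (by rw [Real.dist_eq, abs_of_pos] <;> cases hs <;> linarith)).1
    have := hint t (t + ε / 2) ht.1.le hltb.le hb.1.2.le
    linarith
  rw [hgval] at hgle
  have hzero : ‖deriv x t + gradient E (x t)‖ = 0 := by
    nlinarith [norm_nonneg (deriv x t + gradient E (x t)),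
      sq_nonneg ‖deriv x t + gradient E (x t)‖]
  have := norm_eq_zero.mp hzero
  exact eq_neg_of_add_eq_zero_left this
end
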